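/- Let φ be an automorphism of a finite group F. Then the number of fixed points of φ satisfies |C(φ)| ≤ 2^(2^(R(φ))), where R(φ) is the Reidemeister number of φ. -/

import Mathlib

set_option maxHeartbeats 1000000

/-- The twisted-conjugacy relation of an endomorphism `φ`. -/
def twistedConjRel {G : Type*} [Group G] (φ : G →* G) (x y : G) : Prop :=
  ∃ g : G, y = g * x * (φ g)⁻¹

/-- The set of Reidemeister classes of `φ`. -/
def ReidClasses (G : Type*) [Group G] (φ : G →* G) : Type _ :=
  Quot (twistedConjRel φ)


/-- `(k+1)^k ≤ 3 k^k`, i.e. `(1+1/k)^k ≤ 3`. -/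
lemma succ_pow_le_three_mul (k : ℕ) : (k+1)^k ≤ 3 * k^k := by
  rcases Nat.eq_zero_or_pos k with h | h
  · subst h; norm_num
  have hk : (0:ℝ) < k := by positivity
  have h1 : ((k+1 : ℕ) : ℝ)^k ≤ 3 * ((k:ℝ))^k := by
    have e2 : ((1 + (1:ℝ)/k))^k ≤ Real.exp (1/k) ^ k := by
      apply pow_le_pow_left₀ (by positivity)
      have := Real.add_one_le_exp ((1:ℝ)/k)
      linarith
    have e3 : Real.exp (1/k) ^ k = Real.exp 1 := by
      rw [← Real.exp_nat_mul]
      congr 1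
      field_simp
    have e4 : Real.exp 1 ≤ 3 := by
      have := Real.exp_one_lt_d9
      linarith
    calc ((k+1 : ℕ) : ℝ)^k = ((1 + 1/k))^k * (k:ℝ)^k := by
          push_cast
          rw [← mul_pow]
          congr 1
          field_simp
      _ ≤ Real.exp (1/k)^k * (k:ℝ)^k := by
          apply mul_le_mul_of_nonneg_right e2 (by positivity)
      _ = Real.exp 1 * (k:ℝ)^k := by rw [e3]
      _ ≤ 3 * (k:ℝ)^k := by
          apply mul_le_mul_of_nonneg_right e4 (by positivity)
  exact_mod_cast h1



lemma nine_le_twelve (κ : ℕ) (h : 1 ≤ κ) : 9*(κ+2) ≤ 12^(κ+1) := by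
  induction κ with
  | zero => omega
  | succ n ih =>
    rcases Nat.eq_zero_or_pos n with h0 | h0
    · subst h0; norm_num
    · have := ih h0
      calc 9*(n+1+2) ≤ 12 * (9*(n+2)) := by nlinarith
        _ ≤ 12 * 12^(n+1) := by omega
        _ = 12^(n+2) := by ring

lemma nine_le_four (κ : ℕ) (h : 3 ≤ κ) : 9*(κ+2) ≤ 4^(κ+1) := by
  induction κ with
  | zero => omega
  | succ n ih =>
    rcases Nat.lt_or_ge n 3 with h0 | h0
    · interval_cases n <;> simp_all <;> norm_num
    · have := ih h0
      calc 9*(n+1+2) ≤ 4 * (9*(n+2)) := by nlinarith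
        _ ≤ 4 * 4^(n+1) := by omega
        _ = 4^(n+2) := by ring

lemma step_lemma (s' : ℕ) :
    4*(s'+2)*(s'+1)^(s'+1)*3^(s'+1) ≤ 9*(s'+2)*(4*(s'+1)*s'^s'*3^s') := by
  have h := succ_pow_le_three_mul s'
  calc 4*(s'+2)*(s'+1)^(s'+1)*3^(s'+1)
      = 4*(s'+2)*(s'+1)*((s'+1)^s')*(3*3^s') := by ring
    _ ≤ 4*(s'+2)*(s'+1)*(3*s'^s')*(3*3^s') := by
        apply Nat.mul_le_mul_right
        apply Nat.mul_le_mul_left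
        exact h
    _ = 9*(s'+2)*(4*(s'+1)*s'^s'*3^s') := by ring

lemma hstep_lemma (s κ : ℕ) (hκ : 1 ≤ κ) (h : 2 ≤ s ∨ (s = 1 ∧ 3 ≤ κ)) :
    9*(s+κ+1) ≤ (4*s^s*3^(s-1))^(2^κ) := by
  have hA1 : 1 ≤ 4*s^s*3^(s-1) := by
    have h1 : 0 < s^s := by
      rcases Nat.eq_zero_or_pos s with h | h
      · subst h; norm_num
      · exact Nat.pow_pos h
    have h2 : 0 < 3^(s-1) := Nat.pow_pos (by norm_num)
    calc 1 ≤ 4*(s^s*3^(s-1)) := by nlinarith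
      _ = 4*s^s*3^(s-1) := by ring
  have hk2 : κ+1 ≤ 2^κ := Nat.lt_two_pow_self
  rcases h with hs2 | ⟨hs1, hκ3⟩
  · have hA : 12*s ≤ 4*s^s*3^(s-1) := by
      have h1 : s ≤ s^s := Nat.le_self_pow (by omega) s
      have h2 : 3 ≤ 3^(s-1) := by
        calc 3 = 3^1 := by norm_num
        _ ≤ 3^(s-1) := Nat.pow_le_pow_right (by norm_num) (by omega)
      calc 12*s = 4*s*3 := by ring
        _ ≤ 4*s^s*3^(s-1) := Nat.mul_le_mul (Nat.mul_le_mul_left 4 h1) h2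
    calc 9*(s+κ+1) ≤ 9*(s*(κ+2)) := by nlinarith
      _ ≤ 12^(κ+1)*s := by
          have := nine_le_twelve κ hκ
          nlinarith
      _ ≤ 12^(κ+1)*s^(κ+1) := by
          apply Nat.mul_le_mul_left
          exact Nat.le_self_pow (by omega) s
      _ = (12*s)^(κ+1) := by rw [mul_pow]
      _ ≤ (4*s^s*3^(s-1))^(κ+1) := Nat.pow_le_pow_left hA _
      _ ≤ (4*s^s*3^(s-1))^(2^κ) := Nat.pow_le_pow_right (by omega) hk2
  · subst hs1
    have h4 : 9*(κ+2) ≤ 4^(κ+1) := nine_le_four κ hκ3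
    calc 9*(1+κ+1) = 9*(κ+2) := by ring
      _ ≤ 4^(κ+1) := h4
      _ ≤ 4^(2^κ) := Nat.pow_le_pow_right (by omega) hk2
      _ ≤ (4*1^1*3^(1-1))^(2^κ) := by norm_num
      _ = (4*1^1*3^(1-1))^(2^κ) := rfl

/-- the key two-variable numeric inequality -/
lemma num' (s κ : ℕ) (hκ : 1 ≤ κ) (h : 2 ≤ s ∨ (s = 1 ∧ 3 ≤ κ)) :
    4*(s+κ)*(s+κ-1)^(s+κ-1)*3^(s+κ-1) ≤ (4*s^s*3^(s-1))^(2^κ) := by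
  have hs1 : 1 ≤ s := by rcases h with h | h <;> omega
  rcases h with hs2 | ⟨hseq, hκ3⟩
  · -- s ≥ 2 : induction from κ = 1
    induction κ with
    | zero => omega
    | succ n ih =>
      rcases Nat.eq_zero_or_pos n with h0 | h0
      · subst h0
        -- base : κ = 1, s' = s
        have e1 : s + 1 - 1 = s := by omega
        rw [e1]
        have hb : 4*(s+1)*s^s*3^s ≤ (4*s^s*3^(s-1))^2 := by
          have e2 : (4*s^s*3^(s-1))^2 = 16*(s^s*s^s)*(3^(s-1)*3^(s-1)) := by ring
          have e3 : 3^(s-1)*3^(s-1) = 3^s * 3^(s-2) := by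
            rw [← pow_add, ← pow_add]; congr 1; omega
          have h1 : s+1 ≤ 4*s^s*3^(s-2) := by
            have : s+1 ≤ 4*s := by omega
            have hss : s ≤ s^s := Nat.le_self_pow (by omega) s
            have h32 : 1 ≤ 3^(s-2) := Nat.one_le_pow _ _ (by norm_num)
            nlinarith
          calc 4*(s+1)*s^s*3^s ≤ 4*(4*s^s*3^(s-2))*s^s*3^s := by
                have := Nat.mul_le_mul_right (3^s) (Nat.mul_le_mul_right (s^s) (Nat.mul_le_mul_left 4 h1))
                calc 4*(s+1)*s^s*3^s = 4*(s+1)*(s^s)*(3^s) := by ring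
                  _ ≤ 4*(4*s^s*3^(s-2))*(s^s)*(3^s) := by exact this
                  _ = 4*(4*s^s*3^(s-2))*s^s*3^s := by ring
            _ = 16*(s^s*s^s)*(3^s*3^(s-2)) := by ring
            _ = 16*(s^s*s^s)*(3^(s-1)*3^(s-1)) := by rw [e3]
            _ = (4*s^s*3^(s-1))^2 := by ring
        simpa using hb
      · -- step
        have ih' := ih h0
        have hstep := hstep_lemma s n h0 (Or.inl hs2)
        have e1 : s + (n+1) - 1 = (s + n - 1) + 1 := by omega
        have e2 : s + (n+1) = (s + n - 1) + 2 := by omega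
        rw [e1, e2]
        set s' := s + n - 1 with hs'
        have hst := step_lemma s'
        have hss' : s' + 2 = s + n + 1 := by omega
        calc 4*(s'+2)*(s'+1)^(s'+1)*3^(s'+1)
            ≤ 9*(s'+2)*(4*(s'+1)*s'^s'*3^s') := hst
          _ ≤ (4*s^s*3^(s-1))^(2^n) * (4*s^s*3^(s-1))^(2^n) := by
              have hA : s' + 1 = s + n := by omega
              apply Nat.mul_le_mul
              · rw [hss']; exact hstep
              · rw [hA]; exact ih'
          _ = (4*s^s*3^(s-1))^(2^(n+1)) := by
              rw [← pow_add]; congr 1; omega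
  · -- s = 1, κ ≥ 3
    subst hseq
    induction κ with
    | zero => omega
    | succ n ih =>
      rcases Nat.lt_or_ge n 3 with h0 | h0
      · have : n = 2 := by omega
        subst this
        norm_num
      · have ih' := ih (by omega) h0
        have hstep := hstep_lemma 1 n (by omega) (Or.inr ⟨rfl, h0⟩)
        have e1 : 1 + (n+1) - 1 = (1 + n - 1) + 1 := by omega
        have e2 : 1 + (n+1) = (1 + n - 1) + 2 := by omega
        rw [e1, e2]
        set s' := 1 + n - 1 with hs'
        have hst := step_lemma s'
        have hss' : s' + 2 = 1 + n + 1 := by omega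
        calc 4*(s'+2)*(s'+1)^(s'+1)*3^(s'+1)
            ≤ 9*(s'+2)*(4*(s'+1)*s'^s'*3^s') := hst
          _ ≤ (4*1^1*3^(1-1))^(2^n) * (4*1^1*3^(1-1))^(2^n) := by
              have hA : s' + 1 = 1 + n := by omega
              apply Nat.mul_le_mul
              · rw [hss']; exact hstep
              · rw [hA]; exact ih'
          _ = (4*1^1*3^(1-1))^(2^(n+1)) := by
              rw [← pow_add]; congr 1; omega



/-- the invariant quantity -/
def Gf (D : ℕ) (w : ℚ) (s : ℕ) : ℚ := 4 * D * w^(s-1) * (s:ℚ)^s * 3^(s-1)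

lemma one_le_Gf {D : ℕ} {w : ℚ} {s : ℕ} (hD : 1 ≤ D) (hw : 1 ≤ w) (hs : 1 ≤ s) :
    1 ≤ Gf D w s := by
  unfold Gf
  have h1 : (1:ℚ) ≤ D := by exact_mod_cast hD
  have h2 : (1:ℚ) ≤ w^(s-1) := one_le_pow₀ hw
  have h3 : (1:ℚ) ≤ (s:ℚ)^s := one_le_pow₀ (by exact_mod_cast hs)
  have h4 : (1:ℚ) ≤ (3:ℚ)^(s-1) := one_le_pow₀ (by norm_num)
  calc (1:ℚ) = 1*1*1*1 := by ring
    _ ≤ (4*(D:ℚ))*(w^(s-1))*((s:ℚ)^s)*((3:ℚ)^(s-1)) := by gcongr <;> linarith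
    _ = 4 * D * w^(s-1) * (s:ℚ)^s * 3^(s-1) := by ring

-- case A core
lemma caseA_core (σ : ℕ) (hσ : 1 ≤ σ) (t : ℚ) (htl : (σ:ℚ) < t) (htu : t ≤ (σ:ℚ)+1) :
    t^σ * (σ:ℚ)^σ ≤ 3 * (t-1)^(σ-1) * ((σ:ℚ)+1)^(σ+1) := by
  have ht1 : (1:ℚ) ≤ t := le_trans (by exact_mod_cast hσ : (1:ℚ) ≤ σ) (le_of_lt htl)
  match σ, hσ with
  | 1, _ =>
    push_cast at htl htu ⊢
    norm_num
    nlinarith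
  | 2, _ =>
    push_cast at htl htu ⊢
    norm_num
    have hf : (t-2)*(3-t) ≥ 0 := mul_nonneg (by linarith) (by linarith)
    nlinarith
  | (σ+3), _ =>
    push_cast at htl htu
    have e1 : σ+3-1 = σ+2 := rfl
    rw [e1]
    push_cast
    have e2 : ((σ:ℚ)+3+1) = (σ:ℚ)+4 := by ring
    have e3 : σ+3+1 = σ+4 := rfl
    rw [e2, e3]
    have htm1 : (0:ℚ) < t - 1 := by linarith
    have hσq : (0:ℚ) ≤ (σ:ℚ) := by positivity
    -- t*(σ+2) ≤ (t-1)*(σ+3)  since σ+3 ≤ t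
    have h2 : t*((σ:ℚ)+2) ≤ (t-1)*((σ:ℚ)+3) := by nlinarith
    have h2p : (t*((σ:ℚ)+2))^(σ+2) ≤ ((t-1)*((σ:ℚ)+3))^(σ+2) :=
      pow_le_pow_left₀ (by nlinarith) h2 _
    have h3 : ((σ:ℚ)+3)^(σ+2) ≤ 3*((σ:ℚ)+2)^(σ+2) := by
      have := succ_pow_le_three_mul (σ+2)
      have hcast : (((σ+2)+1:ℕ):ℚ)^(σ+2) ≤ 3*(((σ+2:ℕ)):ℚ)^(σ+2) := by exact_mod_cast this
      push_cast at hcast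
      convert hcast using 2 <;> ring
    have hp2pos : (0:ℚ) < ((σ:ℚ)+2)^(σ+2) := by positivity
    -- t^(σ+2) ≤ 3*(t-1)^(σ+2)
    have h4 : t^(σ+2) ≤ 3*(t-1)^(σ+2) := by
      rw [mul_pow, mul_pow] at h2p
      have h5 : t^(σ+2) * ((σ:ℚ)+2)^(σ+2) ≤ (t-1)^(σ+2) * (3*((σ:ℚ)+2)^(σ+2)) := by
        calc t^(σ+2) * ((σ:ℚ)+2)^(σ+2) ≤ (t-1)^(σ+2) * ((σ:ℚ)+3)^(σ+2) := h2p
          _ ≤ (t-1)^(σ+2) * (3*((σ:ℚ)+2)^(σ+2)) := by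
              apply mul_le_mul_of_nonneg_left h3 (by positivity)
      have := (mul_le_mul_iff_of_pos_right hp2pos).mp (by linarith [h5] : t^(σ+2) * ((σ:ℚ)+2)^(σ+2) ≤ (3*(t-1)^(σ+2)) * ((σ:ℚ)+2)^(σ+2))
      exact this
    -- assemble
    have hkk : ((σ:ℚ)+3)^(σ+3) ≥ 0 := by positivity
    calc t^(σ+3) * ((σ:ℚ)+3)^(σ+3) = t * t^(σ+2) * ((σ:ℚ)+3)^(σ+3) := by ring
      _ ≤ ((σ:ℚ)+4) * (3*(t-1)^(σ+2)) * ((σ:ℚ)+3)^(σ+3) := by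
          apply mul_le_mul_of_nonneg_right _ hkk
          apply mul_le_mul (by linarith) h4 (by positivity) (by linarith)
      _ = 3*(t-1)^(σ+2) * (((σ:ℚ)+4) * ((σ:ℚ)+3)^(σ+3)) := by ring
      _ ≤ 3*(t-1)^(σ+2) * (((σ:ℚ)+4) * ((σ:ℚ)+4)^(σ+3)) := by
          apply mul_le_mul_of_nonneg_left _ (by positivity)
          apply mul_le_mul_of_nonneg_left _ (by linarith)
          apply pow_le_pow_left₀ (by positivity) (by linarith)
      _ = 3*(t-1)^(σ+2) * ((σ:ℚ)+4)^(σ+4) := by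
          rw [pow_succ ((σ:ℚ)+4) (σ+3)]; ring

lemma N3 (p κ : ℕ) (hκ : 1 ≤ κ) : p + κ ≤ p * 2^κ + κ := by
  have := Nat.lt_two_pow_self (n := κ)
  nlinarith

lemma N3' (p κ : ℕ) (hp : 1 ≤ p) (hκ : 1 ≤ κ) : p + κ ≤ p * 2^κ := by
  have h1 : κ + 1 ≤ 2^κ := Nat.lt_two_pow_self
  calc p + κ ≤ p * (κ+1) := by nlinarith
    _ ≤ p * 2^κ := Nat.mul_le_mul_left p h1


lemma caseC (q : ℚ) (x D p r κ : ℕ)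
    (hκdef : κ = r+1-p) (hr1 : 1 ≤ r) (hc : (1 ≤ p ∧ p ≤ r) ∨ (p = 0 ∧ 2 ≤ r))
    (hq0 : 0 < q) (hq1 : q ≤ 1) (hx1 : 1 ≤ x) (hD1 : 1 ≤ D)
    (hwD : 1/q ≤ (D:ℚ))
    (hs'l : ((r:ℚ)+1) < q * x) (hs'u : q * x ≤ (r:ℚ) + 2) :
    Gf (D*x) (1/(q - 1/x)) (r+1) ≤ (Gf D (1/q) (p+1))^(2^κ) := by
  have hxq : (0:ℚ) < x := by exact_mod_cast hx1
  set t := q * (x:ℚ) with hts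
  have ht1 : 1 < t := by
    have h0 : (0:ℚ) ≤ r := by positivity
    linarith
  have htm0 : 0 < t - 1 := by linarith
  have ht0 : 0 < t := by linarith
  have hq'eq : q - 1/x = (t-1)/x := by field_simp; rw [hts]
  have hq'0 : 0 < q - 1/x := by rw [hq'eq]; positivity
  have hDq : (1:ℚ) ≤ D := by exact_mod_cast hD1
  set w := 1/q with hwdef
  have hw0 : (0:ℚ) < w := by rw [hwdef]; positivity
  have hw1 : (1:ℚ) ≤ w := by
    rw [hwdef, le_div_iff₀ hq0]; linarith
  have hxtw : (x:ℚ) = t * w := by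
    rw [hwdef]; field_simp; rw [hts]; ring
  set w' := 1/(q - 1/x) with hw'def
  have hw'x : w' = (x:ℚ)/(t-1) := by
    rw [hw'def, hq'eq, one_div_div]
  have hw'pos : 0 < w' := by rw [hw'def]; positivity
  have hκ1 : 1 ≤ κ := by omega
  have hrp : p + κ = r + 1 := by omega
  have hGfL : Gf (D*x) w' (r+1) = 4*(D:ℚ)*(x:ℚ)*w'^r*((r:ℚ)+1)^(r+1)*3^r := by
    unfold Gf; push_cast; ring
  have hGfR : Gf D w (p+1) = 4*(D:ℚ)*w^p*((p:ℚ)+1)^(p+1)*3^p := by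
    unfold Gf; push_cast; ring
  rw [hGfL, hGfR]
  have hr0Q : (0:ℚ) < r := by exact_mod_cast hr1
  -- x ≤ (r+2) w
  have hxle : (x:ℚ) ≤ ((r:ℚ)+2)*w := by
    rw [hxtw]
    exact mul_le_mul_of_nonneg_right hs'u (le_of_lt hw0)
  -- w'^r ≤ 3 w^r
  have hw'r : w'^r ≤ 3*w^r := by
    have hweq : w = (x:ℚ)/t := by
      rw [hxtw]; field_simp
    have hcr : w'*(r:ℚ) ≤ w*((r:ℚ)+1) := by
      rw [hw'x, hweq, div_mul_eq_mul_div, div_mul_eq_mul_div, div_le_div_iff₀ htm0 ht0]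
      have hfact : (0:ℚ) ≤ (x:ℚ)*(t-((r:ℚ)+1)) := by
        apply mul_nonneg (le_of_lt hxq)
        linarith
      nlinarith
    have hp1 : (w'*(r:ℚ))^r ≤ (w*((r:ℚ)+1))^r :=
      pow_le_pow_left₀ (by positivity) hcr r
    rw [mul_pow, mul_pow] at hp1
    have hL1 : ((r:ℚ)+1)^r ≤ 3*(r:ℚ)^r := by
      have := succ_pow_le_three_mul r
      have h2 : (((r+1:ℕ)):ℚ)^r ≤ 3*((r:ℕ):ℚ)^r := by exact_mod_cast this
      push_cast at h2
      exact h2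
    have hrr : (0:ℚ) < (r:ℚ)^r := by positivity
    have h3 : w'^r * (r:ℚ)^r ≤ (3*w^r) * (r:ℚ)^r := by
      calc w'^r * (r:ℚ)^r ≤ w^r * ((r:ℚ)+1)^r := hp1
        _ ≤ w^r * (3*(r:ℚ)^r) := by
            apply mul_le_mul_of_nonneg_left hL1 (by positivity)
        _ = (3*w^r) * (r:ℚ)^r := by ring
    exact (mul_le_mul_iff_of_pos_right hrr).mp h3
  -- numeric bound
  have hcond : 2 ≤ p+1 ∨ (p+1 = 1 ∧ 3 ≤ κ) := by
    rcases hc with ⟨h1, _⟩ | ⟨h1, h2⟩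
    · left; omega
    · right; omega
  have hnumN : 4*(r+2)*(r+1)^(r+1)*3^(r+1) ≤ (4*(p+1)^(p+1)*3^p)^(2^κ) := by
    have := num' (p+1) κ hκ1 hcond
    have e1 : p+1+κ = r+2 := by omega
    have e3 : p+1-1 = p := by omega
    rw [e1] at this
    rw [show r+2-1 = r+1 from rfl, e3] at this
    exact this
  have hnumQ : (4*((r:ℚ)+2)*((r:ℚ)+1)^(r+1)*3^(r+1)) ≤ ((4*((p:ℚ)+1)^(p+1)*3^p))^(2^κ) := by
    have := hnumN
    have hcast : ((4*(r+2)*(r+1)^(r+1)*3^(r+1) : ℕ) : ℚ) ≤ (((4*(p+1)^(p+1)*3^p)^(2^κ) : ℕ) : ℚ) := by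
      exact_mod_cast this
    push_cast at hcast
    convert hcast using 2 <;> push_cast <;> ring
  -- D,w part
  have hDw : (D:ℚ) * w^(r+1) ≤ (D:ℚ)^(2^κ) * w^(p*2^κ) := by
    rcases hc with ⟨hp1', hpr'⟩ | ⟨hp0', hr2'⟩
    · have hle : r+1 ≤ p*2^κ := by
        have := N3' p κ hp1' hκ1
        omega
      have h1 : w^(r+1) ≤ w^(p*2^κ) := pow_le_pow_right₀ hw1 hle
      have h2 : (D:ℚ) ≤ (D:ℚ)^(2^κ) := by
        apply le_self_pow₀ hDq
        positivity
      calc (D:ℚ) * w^(r+1) ≤ (D:ℚ) * w^(p*2^κ) := by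
            apply mul_le_mul_of_nonneg_left h1 (by positivity)
        _ ≤ (D:ℚ)^(2^κ) * w^(p*2^κ) := by
            apply mul_le_mul_of_nonneg_right h2 (by positivity)
    · subst hp0'
      have hκr : κ = r+1 := by omega
      have h1 : w^(r+1) ≤ (D:ℚ)^(r+1) := pow_le_pow_left₀ (le_of_lt hw0) hwD _
      have h2 : r+2 ≤ 2^κ := by
        rw [hκr]
        have := Nat.lt_two_pow_self (n := r+1)
        omega
      simp only [Nat.zero_mul, pow_zero, mul_one]
      calc (D:ℚ) * w^(r+1) ≤ (D:ℚ) * (D:ℚ)^(r+1) := by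
            apply mul_le_mul_of_nonneg_left h1 (by positivity)
        _ = (D:ℚ)^(r+2) := by rw [pow_succ]; ring
        _ ≤ (D:ℚ)^(2^κ) := pow_le_pow_right₀ hDq h2
  -- assemble
  calc 4*(D:ℚ)*(x:ℚ)*w'^r*((r:ℚ)+1)^(r+1)*3^r
      ≤ 4*(D:ℚ)*(((r:ℚ)+2)*w)*(3*w^r)*((r:ℚ)+1)^(r+1)*3^r := by
        have e1 : (0:ℚ) ≤ 4*(D:ℚ) := by positivity
        have h1 : 4*(D:ℚ)*(x:ℚ) ≤ 4*(D:ℚ)*(((r:ℚ)+2)*w) :=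
          mul_le_mul_of_nonneg_left hxle e1
        calc 4*(D:ℚ)*(x:ℚ)*w'^r*((r:ℚ)+1)^(r+1)*3^r
            = (4*(D:ℚ)*(x:ℚ)) * w'^r * (((r:ℚ)+1)^(r+1)*3^r) := by ring
          _ ≤ (4*(D:ℚ)*(((r:ℚ)+2)*w)) * (3*w^r) * (((r:ℚ)+1)^(r+1)*3^r) := by
              apply mul_le_mul_of_nonneg_right _ (by positivity)
              apply mul_le_mul h1 hw'r (by positivity) (by positivity)
          _ = 4*(D:ℚ)*(((r:ℚ)+2)*w)*(3*w^r)*((r:ℚ)+1)^(r+1)*3^r := by ring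
    _ = (4*((r:ℚ)+2)*((r:ℚ)+1)^(r+1)*3^(r+1)) * ((D:ℚ) * w^(r+1)) := by
        rw [pow_succ, pow_succ]
        ring
    _ ≤ ((4*((p:ℚ)+1)^(p+1)*3^p))^(2^κ) * ((D:ℚ)^(2^κ) * w^(p*2^κ)) := by
        apply mul_le_mul hnumQ hDw (by positivity) (by positivity)
    _ = (4*(D:ℚ)*w^p*((p:ℚ)+1)^(p+1)*3^p)^(2^κ) := by
        have e : (4*(D:ℚ)*w^p*((p:ℚ)+1)^(p+1)*3^p) = (4*((p:ℚ)+1)^(p+1)*3^p)*((D:ℚ)*(w^p)) := by ring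
        rw [e, mul_pow (4*((p:ℚ)+1)^(p+1)*3^p) ((D:ℚ)*(w^p)) (2^κ),
            mul_pow (D:ℚ) (w^p) (2^κ), ← pow_mul w p (2^κ)]

/-- The key Bellman inequality. -/
lemma key (q : ℚ) (x m D : ℕ) (p r : ℕ)
    (hq0 : 0 < q) (hq1 : q ≤ 1)
    (hm1 : 1 ≤ m) (hmx : m ≤ x) (hD1 : 1 ≤ D)
    (hwD : 1/q ≤ (D:ℚ))
    (hsu : q * m ≤ (p:ℚ)+1) (hsl : (p:ℚ) < q * m)
    (hs'l : ((r:ℚ)+1) < q * x) (hs'u : q * x ≤ (r:ℚ) + 2) :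
    Gf (D*x) (1/(q - 1/x)) (r+1) ≤ (Gf D (1/q) (p+1))^(2^((r+1)+1-(p+1))) := by
  have hx1 : 1 ≤ x := le_trans hm1 hmx
  have hxq : (0:ℚ) < x := by exact_mod_cast hx1
  set t := q * (x:ℚ) with hts
  have ht1 : 1 < t := by
    have h0 : (0:ℚ) ≤ r := by positivity
    linarith
  have htm0 : 0 < t - 1 := by linarith
  have hq'eq : q - 1/x = (t-1)/x := by
    field_simp; rw [hts]
  have hq'0 : 0 < q - 1/x := by rw [hq'eq]; positivity
  have hw'eq : 1/(q - 1/x) = (x:ℚ)/(t-1) := by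
    rw [hq'eq, one_div_div]
  have hw0 : (0:ℚ) < 1/q := by positivity
  have hw1 : (1:ℚ) ≤ 1/q := by
    rw [le_div_iff₀ hq0]; linarith
  have hxtw : (x:ℚ) = t * (1/q) := by
    field_simp
    rw [hts]; ring
  have hDq : (1:ℚ) ≤ D := by exact_mod_cast hD1
  have hmq : (m:ℚ) ≤ (x:ℚ) := by exact_mod_cast hmx
  have hqmqx : q * m ≤ q * x := by
    apply mul_le_mul_of_nonneg_left hmq (le_of_lt hq0)
  -- p ≤ r + 1
  have hpr : p ≤ r + 1 := by
    have : (p:ℚ) < (r:ℚ) + 2 := lt_of_lt_of_le (lt_of_lt_of_le hsl (le_trans hqmqx hs'u)) (le_refl _)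
    have := (by exact_mod_cast this : p < r + 2)
    omega
  set w := 1/q with hwdef
  set w' := 1/(q - 1/x) with hw'def
  have hw'pos : 0 < w' := by rw [hw'def]; positivity
  have hw'x : w' = (x:ℚ)/(t-1) := hw'eq
  -- expand the Gf on the left
  have hGfL : Gf (D*x) w' (r+1) = 4*(D:ℚ)*(x:ℚ)*w'^r*((r:ℚ)+1)^(r+1)*3^r := by
    unfold Gf
    push_cast
    ring
  have hGfR : Gf D w (p+1) = 4*(D:ℚ)*w^p*((p:ℚ)+1)^(p+1)*3^p := by
    unfold Gf
    push_cast
    ring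
  by_cases hA : p = r + 1
  · -- Case A : stall
    subst hA
    have hexp : (r+1)+1-((r+1)+1) = 0 := by omega
    rw [hexp, pow_zero, pow_one, hGfL, hGfR]
    push_cast
    have hcore := caseA_core (r+1) (by omega) t (by push_cast; linarith) (by push_cast; linarith)
    have he : (r+1)-1 = r := rfl
    rw [he] at hcore
    push_cast at hcore
    -- LHS * (t-1)^r ≤ RHS * (t-1)^r
    rw [hw'x]
    have hxr : (x:ℚ) * ((x:ℚ)/(t-1))^r = (x:ℚ)^(r+1) / (t-1)^r := by
      rw [div_pow]
      field_simp
      ring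
    have htp : (0:ℚ) < (t-1)^r := by positivity
    calc 4*(D:ℚ)*(x:ℚ)*((x:ℚ)/(t-1))^r*((r:ℚ)+1)^(r+1)*3^r
        = (4*(D:ℚ)*3^r*((r:ℚ)+1)^(r+1)) * ((x:ℚ) * ((x:ℚ)/(t-1))^r) := by ring
      _ = (4*(D:ℚ)*3^r*((r:ℚ)+1)^(r+1) * (x:ℚ)^(r+1)) / (t-1)^r := by rw [hxr]; ring
      _ ≤ 4*(D:ℚ)*w^(r+1)*((r:ℚ)+1+1)^(r+1+1)*3^(r+1) := by
          rw [div_le_iff₀ htp, hxtw, mul_pow]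
          have h0 : (0:ℚ) ≤ 4*(D:ℚ)*3^r*w^(r+1) := by positivity
          calc 4*(D:ℚ)*3^r*((r:ℚ)+1)^(r+1) * (t^(r+1) * w^(r+1))
              = (4*(D:ℚ)*3^r*w^(r+1)) * (t^(r+1) * ((r:ℚ)+1)^(r+1)) := by ring
            _ ≤ (4*(D:ℚ)*3^r*w^(r+1)) * (3 * (t-1)^r * ((r:ℚ)+1+1)^(r+1+1)) := by
                apply mul_le_mul_of_nonneg_left _ h0
                convert hcore using 3 <;> push_cast <;> ring
            _ = 4*(D:ℚ)*w^(r+1)*((r:ℚ)+1+1)^(r+1+1)*3^(r+1) * (t-1)^r := by ring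
  · -- p ≤ r
    have hpr2 : p ≤ r := by omega
    have hexp : (r+1)+1-(p+1) = r+1-p := by omega
    rw [hexp]
    set κ := r + 1 - p with hκdef
    have hκ1 : 1 ≤ κ := by omega
    rcases Nat.eq_zero_or_pos p with hp0 | hp1
    · subst hp0
      by_cases hr0 : r = 0
      · -- case B1
        subst hr0
        have hgl : Gf (D*x) w' (0+1) = 4*(D:ℚ)*(x:ℚ) := by
          unfold Gf; push_cast; ring
        have hgr : Gf D w (0+1) = 4*(D:ℚ) := by
          unfold Gf; push_cast; ring
        rw [hgl, hgr]
        have ht2 : t ≤ 2 := by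
          have := hs'u; push_cast at this; linarith
        have hx2w : (x:ℚ) ≤ 2*w := by
          rw [hxtw]
          nlinarith [mul_nonneg (by linarith : (0:ℚ) ≤ 2-t) (le_of_lt hw0)]
        have hx2D : (x:ℚ) ≤ 2*(D:ℚ) := le_trans hx2w (by linarith)
        have hκ0 : κ = 1 := by omega
        rw [hκ0]
        have hD0 : (0:ℚ) < D := by linarith
        calc 4*(D:ℚ)*(x:ℚ) ≤ 4*(D:ℚ)*(2*(D:ℚ)) := by
              apply mul_le_mul_of_nonneg_left hx2D (by positivity)
          _ = 8*(D:ℚ)^2 := by ring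
          _ ≤ 16*(D:ℚ)^2 := by nlinarith [sq_nonneg (D:ℚ)]
          _ = (4*(D:ℚ))^(2^1) := by norm_num; ring
      · by_cases hr1 : r = 1
        · -- case SP
          subst hr1
          have hκ0 : κ = 2 := by omega
          rw [hκ0]
          have hgl : Gf (D*x) w' (1+1) = 48*(D:ℚ)*((x:ℚ)*w') := by
            unfold Gf; push_cast; ring
          have hgr : Gf D w (0+1) = 4*(D:ℚ) := by
            unfold Gf; push_cast; ring
          rw [hgl, hgr]
          have ht2 : 2 < t := by
            have := hs'l; push_cast at this; linarith
          have ht3 : t ≤ 3 := by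
            have := hs'u; push_cast at this; linarith
          have h9 : 2*t^2 ≤ 9*(t-1) := by
            nlinarith [mul_nonneg (by linarith : (0:ℚ) ≤ t-2) (by linarith : (0:ℚ) ≤ 3-t)]
          have hxw' : (x:ℚ)*w' = t^2*w^2/(t-1) := by
            rw [hw'x, hxtw]
            field_simp
          have hxw'le : (x:ℚ)*w' ≤ (9/2)*w^2 := by
            rw [hxw', div_le_iff₀ htm0]
            nlinarith [sq_nonneg w, mul_pos hw0 hw0]
          have hwD2 : w^2 ≤ (D:ℚ)^2 := pow_le_pow_left₀ (le_of_lt hw0) hwD 2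
          calc 48*(D:ℚ)*((x:ℚ)*w') ≤ 48*(D:ℚ)*((9/2)*w^2) := by
                apply mul_le_mul_of_nonneg_left hxw'le (by positivity)
            _ = 216*(D:ℚ)*w^2 := by ring
            _ ≤ 216*(D:ℚ)*(D:ℚ)^2 := by
                apply mul_le_mul_of_nonneg_left hwD2 (by positivity)
            _ ≤ 256*(D:ℚ)^4 := by
                have h1 : (D:ℚ)^3 ≤ (D:ℚ)^4 := pow_le_pow_right₀ hDq (by norm_num)
                have h2 : (0:ℚ) ≤ (D:ℚ)^4 := by positivity
                nlinarith [h1, h2]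
            _ = (4*(D:ℚ))^(2^2) := by ring
        · -- case C with p = 0, r ≥ 2
          exact caseC q x D 0 r κ (by omega) (by omega) (Or.inr (by omega))
            hq0 hq1 hx1 hD1 hwD hs'l hs'u
    · -- case C with p ≥ 1
      exact caseC q x D p r κ (by omega) (by omega) (Or.inl (by omega))
        hq0 hq1 hx1 hD1 hwD hs'l hs'u

lemma D_le_Gf {D : ℕ} {w : ℚ} {p : ℕ} (hD : 1 ≤ D) (hw : 1 ≤ w) :
    (D:ℚ) ≤ Gf D w (p+1) := by
  unfold Gf
  have h2 : (1:ℚ) ≤ w^(p+1-1) := one_le_pow₀ hw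
  have h3 : (1:ℚ) ≤ ((p+1:ℕ):ℚ)^(p+1) := one_le_pow₀ (by exact_mod_cast Nat.le_add_left 1 p)
  have h4 : (1:ℚ) ≤ (3:ℚ)^(p+1-1) := one_le_pow₀ (by norm_num)
  have hD0 : (0:ℚ) < D := by exact_mod_cast hD
  nlinarith [mul_le_mul h2 h3 (by linarith) (by linarith),
    mul_le_mul (mul_le_mul h2 h3 (by linarith) (by linarith)) h4 (by linarith) (by nlinarith)]

/-- Main induction. -/
lemma egyptian_bound (l : List ℕ) (hsort : l.Pairwise (·≤·)) :
    ∀ (q : ℚ) (m D p : ℕ),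
    1 ≤ m → 1 ≤ D → (∀ a ∈ l, m ≤ a) →
    ((l.map (fun a : ℕ => 1/(a:ℚ))).sum = q) → 0 < q → q ≤ 1 →
    (∃ k : ℤ, q*(D:ℚ) = k) →
    ((p:ℚ) < q * m) → (q * m ≤ (p:ℚ)+1) →
    ∀ a ∈ l, (a:ℚ) ≤ (Gf D (1/q) (p+1))^(2^(l.length - (p+1))) := by
  induction l with
  | nil => intro q m D p _ _ _ _ _ _ _ _ _ a ha; simp at ha
  | cons x xs ih =>
    intro q m D p hm1 hD1 hmem hsum hq0 hq1 hden hsl hsu a ha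
    have hmx : m ≤ x := hmem x (by simp)
    have hx1 : 1 ≤ x := le_trans hm1 hmx
    have hxq : (0:ℚ) < x := by exact_mod_cast hx1
    have hxtail : ∀ b ∈ xs, x ≤ b := fun b hb => (List.pairwise_cons.mp hsort).1 b hb
    have htailsorted : xs.Pairwise (·≤·) := (List.pairwise_cons.mp hsort).2
    obtain ⟨k, hk⟩ := hden
    have hk1 : (1:ℚ) ≤ k := by
      have h0 : (0:ℚ) < k := by rw [← hk]; positivity
      have : (0:ℤ) < k := by exact_mod_cast h0
      exact_mod_cast this
    have hwD : 1/q ≤ (D:ℚ) := by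
      rw [div_le_iff₀ hq0]
      calc (1:ℚ) ≤ k := hk1
        _ = q*D := hk.symm
        _ = D*q := by ring
    have hw1 : (1:ℚ) ≤ 1/q := by rw [le_div_iff₀ hq0]; linarith
    rw [List.map_cons, List.sum_cons] at hsum
    set q' : ℚ := (xs.map (fun a : ℕ => 1/(a:ℚ))).sum with hq'def
    have hq'eq : q' = q - 1/x := by rw [← hsum]; ring
    -- two cases on xs
    rcases xs with _ | ⟨y, ys⟩
    · -- singleton list
      simp only [List.mem_singleton, List.mem_cons, List.not_mem_nil, or_false] at ha
      subst ha
      have hq'0 : q' = 0 := by rw [hq'def]; simp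
      have hxq' : (a:ℚ) = 1/q := by
        rw [hq'0] at hq'eq
        have : q = 1/a := by linarith
        rw [this]; field_simp
      have hlen : (a :: ([]:List ℕ)).length - (p+1) = 0 := by simp
      rw [hlen, pow_zero, pow_one]
      calc (a:ℚ) = 1/q := hxq'
        _ ≤ (D:ℚ) := hwD
        _ ≤ Gf D (1/q) (p+1) := D_le_Gf hD1 hw1
    · -- tail nonempty
      set xs := y :: ys with hxs
      have hy1 : 1 ≤ y := le_trans hx1 (hxtail y (by simp [hxs]))
      have hq'0 : 0 < q' := by
        rw [hq'def, hxs, List.map_cons, List.sum_cons]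
        have h1 : (0:ℚ) < 1/(y:ℚ) := by
          have : (0:ℚ) < y := by exact_mod_cast hy1
          positivity
        have h2 : (0:ℚ) ≤ ((ys.map (fun a : ℕ => 1/(a:ℚ)))).sum := by
          apply List.sum_nonneg
          intro b hb
          simp only [List.mem_map] at hb
          obtain ⟨c, hc, rfl⟩ := hb
          positivity
        linarith
      have hq'1 : q' ≤ 1 := by
        rw [hq'eq]
        have : (0:ℚ) < 1/x := by positivity
        linarith
      have ht1 : 1 < q*(x:ℚ) := by
        have h1 : 1/(x:ℚ) < q := by rw [hq'eq] at hq'0; linarith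
        rw [div_lt_iff₀ hxq] at h1
        linarith
      set t := q*(x:ℚ) with htdef
      -- choose r from the ceiling of t
      set c : ℤ := ⌈t⌉ with hcdef
      have hc2 : 2 ≤ c := by
        have h1 : (1:ℚ) < c := lt_of_lt_of_le ht1 (Int.le_ceil t)
        have : (1:ℤ) < c := by exact_mod_cast h1
        omega
      set r : ℕ := c.toNat - 2 with hrdef
      have hrc : (r:ℚ) + 2 = (c:ℚ) := by
        have h1 : (r:ℤ) + 2 = c := by omega
        exact_mod_cast h1
      have hs'u : t ≤ (r:ℚ) + 2 := by rw [hrc]; exact Int.le_ceil t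
      have hs'l : (r:ℚ) + 1 < t := by
        have h2 : (c:ℚ) < t + 1 := Int.ceil_lt_add_one t
        linarith [hrc]
      have htq' : q' * x = t - 1 := by
        rw [hq'eq, htdef]
        field_simp
      -- tail length bound
      have hterm : ∀ b ∈ xs.map (fun a : ℕ => 1/(a:ℚ)), b ≤ 1/(x:ℚ) := by
        intro b hb
        simp only [List.mem_map] at hb
        obtain ⟨cc, hcc, rfl⟩ := hb
        have h1 : (x:ℚ) ≤ cc := by exact_mod_cast hxtail cc hcc
        exact one_div_le_one_div_of_le hxq h1
      have hq'x_le : q' * x ≤ (xs.length : ℚ) := by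
        have hsle := List.sum_le_card_nsmul (xs.map (fun a : ℕ => 1/(a:ℚ))) (1/(x:ℚ)) hterm
        rw [List.length_map] at hsle
        have h2 : q' ≤ (xs.length : ℚ) * (1/(x:ℚ)) := by
          rw [hq'def]
          simpa [nsmul_eq_mul, one_div] using hsle
        calc q'*(x:ℚ) ≤ ((xs.length:ℚ)*(1/x))*x :=
              mul_le_mul_of_nonneg_right h2 (le_of_lt hxq)
          _ = xs.length := by field_simp
      have hrlen : r + 1 ≤ xs.length := by
        have h1 : (r:ℚ) < (xs.length:ℚ) := by
          rw [htq'] at hq'x_le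
          linarith
        have h2 : r < xs.length := by exact_mod_cast h1
        omega
      have hplen : p ≤ r + 1 := by
        have hmqx : q*(m:ℚ) ≤ t := by
          rw [htdef]
          apply mul_le_mul_of_nonneg_left _ (le_of_lt hq0)
          exact_mod_cast hmx
        have h2 : (p:ℚ) < (r:ℚ) + 2 := lt_of_lt_of_le (lt_of_lt_of_le hsl hmqx) hs'u
        have h3 : p < r + 2 := by exact_mod_cast h2
        omega
      have hden' : ∃ k' : ℤ, q'*((D*x:ℕ):ℚ) = k' := by
        refine ⟨k*x - D, ?_⟩
        push_cast
        rw [hq'eq]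
        have hxx : (1/(x:ℚ))*(x:ℚ) = 1 := by field_simp
        calc (q - 1/(x:ℚ))*((D:ℚ)*(x:ℚ)) = (q*(D:ℚ))*(x:ℚ) - (D:ℚ)*((1/(x:ℚ))*(x:ℚ)) := by ring
          _ = (k:ℚ)*(x:ℚ) - (D:ℚ)*1 := by rw [hk, hxx]
          _ = (k:ℚ)*(x:ℚ) - (D:ℚ) := by ring
      have hq'w1 : (1:ℚ) ≤ 1/q' := by rw [le_div_iff₀ hq'0]; linarith
      have hDx1 : 1 ≤ D*x := by
        calc 1 = 1*1 := rfl
        _ ≤ D*x := Nat.mul_le_mul hD1 hx1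
      have hsl' : (r:ℚ) < q'*x := by rw [htq']; linarith
      have hsu' : q'*x ≤ (r:ℚ)+1 := by rw [htq']; linarith
      have ihres := ih htailsorted q' x (D*x) r hx1 hDx1 hxtail hq'def.symm hq'0 hq'1 hden' hsl' hsu'
      have hkey := key q x m D p r hq0 hq1 hm1 hmx hD1 hwD hsu hsl hs'l hs'u
      rw [← hq'eq] at hkey
      have hGf0 : (0:ℚ) ≤ Gf (D*x) (1/q') (r+1) :=
        le_trans zero_le_one (one_le_Gf hDx1 hq'w1 (Nat.le_add_left 1 r))
      have hbound : ∀ b : ℕ, b ∈ xs → (b:ℚ) ≤ (Gf D (1/q) (p+1))^(2^((x::xs).length - (p+1))) := by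
        intro b hb
        have h1 := ihres b hb
        have h2 : (Gf (D*x) (1/q') (r+1))^(2^(xs.length - (r+1)))
            ≤ ((Gf D (1/q) (p+1))^(2^((r+1)+1-(p+1))))^(2^(xs.length-(r+1))) :=
          pow_le_pow_left₀ hGf0 hkey _
        have h3 : ((Gf D (1/q) (p+1))^(2^((r+1)+1-(p+1))))^(2^(xs.length-(r+1)))
            = (Gf D (1/q) (p+1))^(2^((x::xs).length - (p+1))) := by
          rw [← pow_mul, ← pow_add]
          congr 2
          simp only [List.length_cons]
          omega
        calc (b:ℚ) ≤ _ := h1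
          _ ≤ _ := h2
          _ = _ := h3
      rcases List.mem_cons.mp ha with rfl | hain
      · have h1 := hbound y (by simp [hxs])
        have h2 : (a:ℚ) ≤ (y:ℚ) := by exact_mod_cast hxtail y (by simp [hxs])
        linarith
      · exact hbound a hain

section GroupPart

variable {F : Type*} [Group F]

/-- Type synonym carrying the twisted conjugation action. -/
def TCon (φ : F →* F) : Type _ := F

variable (φ : F →* F)

instance : SMul F (TCon φ) := ⟨fun g x => (g * (show F from x) * (φ g)⁻¹ : F)⟩

lemma TCon.smul_def (g : F) (x : TCon φ) :
    g • x = (g * (show F from x) * (φ g)⁻¹ : F) := rfl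

instance : MulAction F (TCon φ) where
  one_smul x := by
    show (1 : F) * (show F from x) * (φ 1)⁻¹ = (show F from x)
    simp
    exact one_mul _
  mul_smul g h x := by
    show (g*h) * (show F from x) * (φ (g*h))⁻¹
        = g * (h * (show F from x) * (φ h)⁻¹) * (φ g)⁻¹
    rw [map_mul]
    group
    exact congrArg (fun z : F => z * φ h ^ (-1) * φ g ^ (-1)) (mul_assoc g h (show F from x))

instance [Finite F] : Finite (TCon φ) := by
  unfold TCon; infer_instance

/-- the identity element as a point of the action space -/
def TCon.pt : TCon φ := (1 : F)

lemma twisted_iff_orbitRel (x y : TCon φ) :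
    twistedConjRel φ (show F from x) (show F from y) ↔ (MulAction.orbitRel F (TCon φ)) x y := by
  rw [MulAction.orbitRel_apply, MulAction.mem_orbit_iff]
  constructor
  · rintro ⟨g, hg⟩
    refine ⟨g⁻¹, ?_⟩
    rw [TCon.smul_def]
    show g⁻¹ * (show F from y) * (φ g⁻¹)⁻¹ = (show F from x)
    rw [hg]
    simp [map_inv]
    group
    rw [zpow_neg_one]; exact inv_mul_cancel_left g _
  · rintro ⟨g, hg⟩
    refine ⟨g⁻¹, ?_⟩
    rw [TCon.smul_def] at hg
    have : g * (show F from y) * (φ g)⁻¹ = (show F from x) := hg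
    rw [← this]
    simp [map_inv]
    group
    rw [zpow_neg_one]; exact (inv_mul_cancel_left g _).symm

/-- Reidemeister classes are the orbit space of the twisted action. -/
noncomputable def reidEquivOrbits :
    ReidClasses F φ ≃ MulAction.orbitRel.Quotient F (TCon φ) :=
  Quot.congrRight (fun x y => twisted_iff_orbitRel φ x y)

/-- The stabilizer of the point `1` is the fixed subgroup. -/
noncomputable def stabPtEquivFixed :
    MulAction.stabilizer F (TCon.pt φ) ≃ {g : F // φ g = g} := by
  apply Equiv.subtypeEquivRight
  intro g
  rw [MulAction.mem_stabilizer_iff]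
  show g * (1:F) * (φ g)⁻¹ = (1:F) ↔ φ g = g
  constructor
  · intro h
    have := congrArg (fun z => z * (φ g)) h
    simp at this
    exact this.symm
  · intro h
    rw [h]
    group

end GroupPart

/-- **Jabara's lemma.** For an automorphism `φ` of a finite group `F`,
the number of fixed points satisfies `|C(φ)| ≤ 2 ^ (2 ^ R(φ))`. -/
theorem card_fixedPoints_le_of_finite
    {F : Type*} [Group F] [Finite F] (φ : F ≃* F) :
    Nat.card {g : F // φ g = g}
      ≤ 2 ^ (2 ^ Nat.card (ReidClasses F φ.toMonoidHom)) := by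
  classical
  set ψ : F →* F := φ.toMonoidHom with hψ
  haveI : Fintype F := Fintype.ofFinite F
  haveI : Fintype (TCon ψ) := Fintype.ofFinite _
  set Ω := MulAction.orbitRel.Quotient F (TCon ψ) with hΩ
  haveI : Fintype Ω := Fintype.ofFinite _
  haveI hstabfin : ∀ b : TCon ψ, Fintype (MulAction.stabilizer F b) := fun b => Fintype.ofFinite _
  -- class formula
  set f : Ω → ℕ := fun ω => Fintype.card (MulAction.stabilizer F (ω.out)) with hf
  have hclass : Fintype.card (TCon ψ) = Finset.univ.sum (fun ω : Ω => Fintype.card F / f ω) :=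
    MulAction.card_eq_sum_card_group_div_card_stabilizer F (TCon ψ)
  have hcardT : Fintype.card (TCon ψ) = Fintype.card F :=
    Fintype.card_congr (Equiv.refl F)
  have hfpos : ∀ ω : Ω, 0 < f ω := fun ω => Fintype.card_pos
  have hNpos : 0 < Fintype.card F := Fintype.card_pos
  have hdvd : ∀ ω : Ω, f ω ∣ Fintype.card F := by
    intro ω
    have := Subgroup.card_subgroup_dvd_card (MulAction.stabilizer F (ω.out : TCon ψ))
    simpa [Nat.card_eq_fintype_card, hf] using this
  -- rational identity : ∑ 1/f ω = 1
  have hsumQ : (Finset.univ.sum (fun ω : Ω => 1/(f ω : ℚ))) = 1 := by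
    have h1 : ((Fintype.card F : ℕ) : ℚ) = Finset.univ.sum (fun ω : Ω => (Fintype.card F : ℚ)/(f ω : ℚ)) := by
      calc ((Fintype.card F : ℕ) : ℚ) = ((Fintype.card (TCon ψ) : ℕ) : ℚ) := by rw [hcardT]
        _ = ((Finset.univ.sum (fun ω : Ω => Fintype.card F / f ω) : ℕ) : ℚ) := by
            exact_mod_cast congrArg (fun z : ℕ => (z:ℚ)) hclass
        _ = Finset.univ.sum (fun ω : Ω => ((Fintype.card F / f ω : ℕ) : ℚ)) := by push_cast; rfl
        _ = Finset.univ.sum (fun ω : Ω => (Fintype.card F : ℚ)/(f ω : ℚ)) := by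
            apply Finset.sum_congr rfl
            intro ω _
            rw [Nat.cast_div (hdvd ω)]
            exact_mod_cast (hfpos ω).ne'
    have h2 : (Fintype.card F : ℚ) ≠ 0 := by exact_mod_cast hNpos.ne'
    have h3 : Finset.univ.sum (fun ω : Ω => (Fintype.card F : ℚ)/(f ω : ℚ))
        = (Fintype.card F : ℚ) * Finset.univ.sum (fun ω : Ω => 1/(f ω : ℚ)) := by
      rw [Finset.mul_sum]
      apply Finset.sum_congr rfl
      intro ω _
      field_simp
    rw [h3] at h1
    field_simp at h1
    linarith [h1]
  -- sorted list of stabilizer sizes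
  set M : Multiset ℕ := Finset.univ.val.map f with hM
  set l : List ℕ := Multiset.sort M (·≤·) with hl
  have hlsort : l.Pairwise (·≤·) := Multiset.pairwise_sort _ _
  have hlcoe : (l : Multiset ℕ) = M := Multiset.sort_eq _ _
  have hlen : l.length = Fintype.card Ω := by
    have h1 : (l : Multiset ℕ).card = M.card := by rw [hlcoe]
    simp only [Multiset.coe_card] at h1
    rw [h1, hM, Multiset.card_map]
    rfl
  have hmeml : ∀ a ∈ l, 1 ≤ a := by
    intro a ha
    have h1 : a ∈ M := by rw [← hlcoe]; exact_mod_cast ha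
    rw [hM] at h1
    obtain ⟨ω, _, rfl⟩ := Multiset.mem_map.mp h1
    exact hfpos ω
  have hsuml : (l.map (fun a : ℕ => 1/(a:ℚ))).sum = 1 := by
    have h1 : ((l.map (fun a : ℕ => 1/(a:ℚ))) : Multiset ℚ).sum
        = (M.map (fun a : ℕ => 1/(a:ℚ))).sum := by
      rw [← Multiset.map_coe, hlcoe]
    have h2 : (M.map (fun a : ℕ => 1/(a:ℚ))).sum
        = Finset.univ.sum (fun ω : Ω => 1/(f ω : ℚ)) := by
      rw [hM, Multiset.map_map]
      rfl
    have h3 : ((l.map (fun a : ℕ => 1/(a:ℚ))) : Multiset ℚ).sum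
        = (l.map (fun a : ℕ => 1/(a:ℚ))).sum := by
      simp
    rw [← h3, h1, h2, hsumQ]
  have hmain := egyptian_bound l hlsort 1 1 1 0 le_rfl le_rfl hmeml hsuml one_pos le_rfl
      ⟨1, by norm_num⟩ (by norm_num) (by norm_num)
  have hGf4 : Gf 1 (1/1) (0+1) = 4 := by unfold Gf; norm_num
  rw [hGf4] at hmain
  -- the orbit of the identity
  letI := MulAction.orbitRel F (TCon ψ)
  set ω₁ : Ω := ⟦TCon.pt ψ⟧ with hω₁
  have hmemM : f ω₁ ∈ M := by
    rw [hM]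
    exact Multiset.mem_map_of_mem f (Finset.mem_univ_val _)
  have hmemL : f ω₁ ∈ l := by
    have : f ω₁ ∈ (l : Multiset ℕ) := by rw [hlcoe]; exact hmemM
    exact_mod_cast this
  have hbound := hmain (f ω₁) hmemL
  -- identify f ω₁ with the fixed point count
  have hrel : (MulAction.orbitRel F (TCon ψ)) ω₁.out (TCon.pt ψ) := Quotient.mk_out (TCon.pt ψ)
  have hstab1 : f ω₁ = Nat.card {g : F // φ g = g} := by
    calc f ω₁ = Nat.card (MulAction.stabilizer F (ω₁.out : TCon ψ)) :=
          (Nat.card_eq_fintype_card).symm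
      _ = Nat.card (MulAction.stabilizer F (TCon.pt ψ)) :=
          Nat.card_congr (MulAction.stabilizerEquivStabilizerOfOrbitRel hrel).toEquiv
      _ = Nat.card {g : F // ψ g = g} := Nat.card_congr (stabPtEquivFixed ψ)
      _ = Nat.card {g : F // φ g = g} := rfl
  -- the number of classes
  have hn : Nat.card (ReidClasses F ψ) = Fintype.card Ω := by
    rw [Nat.card_congr (reidEquivOrbits ψ), Nat.card_eq_fintype_card]
  have hΩpos : 1 ≤ Fintype.card Ω := Fintype.card_pos_iff.mpr ⟨ω₁⟩
  -- cast down to ℕ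
  have hboundN : f ω₁ ≤ 4^(2^(l.length - 1)) := by
    have h1 : (f ω₁ : ℚ) ≤ ((4^(2^(l.length - 1)) : ℕ) : ℚ) := by
      push_cast
      exact hbound
    exact_mod_cast h1
  rw [hstab1, hlen] at hboundN
  rw [hn]
  calc Nat.card {g : F // φ g = g} ≤ 4^(2^(Fintype.card Ω - 1)) := hboundN
    _ = 2^(2^(Fintype.card Ω)) := by
      rw [show (4:ℕ) = 2^2 from rfl, ← pow_mul]
      congr 1
      calc 2*2^(Fintype.card Ω - 1) = 2^((Fintype.card Ω - 1)+1) := (pow_succ' 2 _).symm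
        _ = 2^(Fintype.card Ω) := by congr 1; omega
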